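/- If g(U) = vec(U)ᵀ(C ⊗ C)vec(U) is convex on U(h,h), then for any fixed target weights h̄ ∈ R^n with positive entries summing to 1, the reduced GW barycenter problem min_{T ∈ U(h,h̄)} E(C, C̄(T), T) is a concave minimization problem and hence admits an extreme point of the transport polytope U(h,h̄) as an optimum. -/

import Mathlib

open Matrix BigOperators Kronecker

noncomputable def GWEnergy {N n : ℕ} (C : Matrix (Fin N) (Fin N) ℝ)
    (D : Matrix (Fin n) (Fin n) ℝ) (T : Matrix (Fin N) (Fin n) ℝ) : ℝ :=
  ∑ i, ∑ j, ∑ k, ∑ l, (C i j - D k l) ^ 2 * T i k * T j l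

noncomputable def colSum {N n : ℕ} (T : Matrix (Fin N) (Fin n) ℝ) (k : Fin n) : ℝ :=
  ∑ i, T i k

noncomputable def CbarOf {N n : ℕ} (C : Matrix (Fin N) (Fin N) ℝ)
    (T : Matrix (Fin N) (Fin n) ℝ) : Matrix (Fin n) (Fin n) ℝ :=
  Matrix.of fun k l =>
    if 0 < colSum T k * colSum T l then
      (∑ i, ∑ j, T i k * C i j * T j l) / (colSum T k * colSum T l)
    else 0

section Aux

open Finset

variable {N n : ℕ}

/-- The quadratic form `vec(X)ᵀ (C ⊗ C) vec(Y)` written as an explicit quadruple sum. -/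
private def bb (C X Y : Matrix (Fin N) (Fin N) ℝ) : ℝ :=
  ∑ i, ∑ i', ∑ j, ∑ j', X i i' * C i j * C i' j' * Y j j'

/-- `UU hbar X Y = X Λ Yᵀ` with `Λ = diag(hbar⁻¹)`. -/
private noncomputable def UU (hbar : Fin n → ℝ) (X Y : Matrix (Fin N) (Fin n) ℝ) :
    Matrix (Fin N) (Fin N) ℝ :=
  Matrix.of fun i i' => ∑ k, (hbar k)⁻¹ * (X i k * Y i' k)

/-- `AA C T k l = (Tᵀ C T)_{k l}`. -/
private def AA (C : Matrix (Fin N) (Fin N) ℝ) (T : Matrix (Fin N) (Fin n) ℝ)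
    (k l : Fin n) : ℝ :=
  ∑ i, ∑ j, T i k * C i j * T j l

/-- `ff C hbar T = ∑ (Tᵀ C T)_{kl}² / (hbar k hbar l)`. -/
private noncomputable def ff (C : Matrix (Fin N) (Fin N) ℝ) (hbar : Fin n → ℝ)
    (T : Matrix (Fin N) (Fin n) ℝ) : ℝ :=
  ∑ k, ∑ l, (hbar k)⁻¹ * (hbar l)⁻¹ * (AA C T k l) ^ 2

variable {C X Y Z : Matrix (Fin N) (Fin N) ℝ} {c : ℝ}

private lemma bb_add_left : bb C (X + Z) Y = bb C X Y + bb C Z Y := by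
  simp [bb, Matrix.add_apply, add_mul, Finset.sum_add_distrib]

private lemma bb_add_right : bb C X (Y + Z) = bb C X Y + bb C X Z := by
  simp [bb, Matrix.add_apply, mul_add, Finset.sum_add_distrib]

private lemma bb_sub_left : bb C (X - Z) Y = bb C X Y - bb C Z Y := by
  simp [bb, Matrix.sub_apply, sub_mul, Finset.sum_sub_distrib]

private lemma bb_sub_right : bb C X (Y - Z) = bb C X Y - bb C X Z := by
  simp [bb, Matrix.sub_apply, mul_sub, Finset.sum_sub_distrib]

private lemma bb_smul_left : bb C (c • X) Y = c * bb C X Y := by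
  simp only [bb, Matrix.smul_apply, smul_eq_mul, Finset.mul_sum]
  exact sum_congr rfl fun i _ => sum_congr rfl fun i' _ =>
    sum_congr rfl fun j _ => sum_congr rfl fun j' _ => by ring

private lemma bb_smul_right : bb C X (c • Y) = c * bb C X Y := by
  simp only [bb, Matrix.smul_apply, smul_eq_mul, Finset.mul_sum]
  exact sum_congr rfl fun i _ => sum_congr rfl fun i' _ =>
    sum_congr rfl fun j _ => sum_congr rfl fun j' _ => by ring

private lemma sum_reorder6 {α β γ δ ε ζ : Type*} [Fintype α] [Fintype β] [Fintype γ]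
    [Fintype δ] [Fintype ε] [Fintype ζ] (F : α → β → γ → δ → ε → ζ → ℝ) :
    ∑ a, ∑ b, ∑ c, ∑ d, ∑ e, ∑ f, F a b c d e f
      = ∑ e, ∑ f, ∑ a, ∑ c, ∑ b, ∑ d, F a b c d e f := by
  have h1 : ∑ x : α × β × γ × δ × ε × ζ,
      F x.1 x.2.1 x.2.2.1 x.2.2.2.1 x.2.2.2.2.1 x.2.2.2.2.2
      = ∑ a, ∑ b, ∑ c, ∑ d, ∑ e, ∑ f, F a b c d e f := by
    simp only [Fintype.sum_prod_type]
  have h2 : ∑ y : ε × ζ × α × γ × β × δ,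
      F y.2.2.1 y.2.2.2.2.1 y.2.2.2.1 y.2.2.2.2.2 y.1 y.2.1
      = ∑ e, ∑ f, ∑ a, ∑ c, ∑ b, ∑ d, F a b c d e f := by
    simp only [Fintype.sum_prod_type]
  rw [← h1, ← h2]
  exact Fintype.sum_equiv
    ⟨fun x => (x.2.2.2.2.1, x.2.2.2.2.2, x.1, x.2.2.1, x.2.1, x.2.2.2.1),
     fun y => (y.2.2.1, y.2.2.2.2.1, y.2.2.2.1, y.2.2.2.2.2, y.1, y.2.1),
     fun ⟨a,b,c,d,e,f⟩ => rfl, fun ⟨e,f,a,c,b,d⟩ => rfl⟩ _ _ (fun ⟨a,b,c,d,e,f⟩ => rfl)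

private lemma sum_reorder4 {α β γ δ : Type*} [Fintype α] [Fintype β] [Fintype γ]
    [Fintype δ] (F : α → β → γ → δ → ℝ) :
    ∑ a, ∑ b, ∑ c, ∑ d, F a b c d = ∑ c, ∑ d, ∑ a, ∑ b, F a b c d := by
  have h1 : ∑ x : α × β × γ × δ, F x.1 x.2.1 x.2.2.1 x.2.2.2
      = ∑ a, ∑ b, ∑ c, ∑ d, F a b c d := by simp only [Fintype.sum_prod_type]
  have h2 : ∑ y : γ × δ × α × β, F y.2.2.1 y.2.2.2 y.1 y.2.1
      = ∑ c, ∑ d, ∑ a, ∑ b, F a b c d := by simp only [Fintype.sum_prod_type]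
  rw [← h1, ← h2]
  exact Fintype.sum_equiv
    ⟨fun x => (x.2.2.1, x.2.2.2, x.1, x.2.1), fun y => (y.2.2.1, y.2.2.2, y.1, y.2.1),
     fun ⟨a,b,c,d⟩ => rfl, fun ⟨c,d,a,b⟩ => rfl⟩ _ _ (fun ⟨a,b,c,d⟩ => rfl)

private lemma mul_sum_sum {α β : Type*} [Fintype α] [Fintype β] (c : ℝ) (f : α → ℝ)
    (g : β → ℝ) : ∑ k, ∑ l, c * (f k * g l) = c * ((∑ k, f k) * (∑ l, g l)) := by
  rw [Finset.sum_mul_sum, Finset.mul_sum]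
  exact sum_congr rfl fun k _ => by rw [Finset.mul_sum]

/-- Key rearrangement: the Kronecker quadratic form of Gram-type matrices. -/
private lemma bb_UU_eq (C : Matrix (Fin N) (Fin N) ℝ) (hbar : Fin n → ℝ)
    (X Y : Matrix (Fin N) (Fin n) ℝ) :
    bb C (UU hbar X X) (UU hbar Y Y)
      = ∑ k, ∑ l, (hbar k)⁻¹ * (hbar l)⁻¹ * (∑ i, ∑ j, X i k * C i j * Y j l) ^ 2 := by
  have lhs : bb C (UU hbar X X) (UU hbar Y Y)
      = ∑ i, ∑ i', ∑ j, ∑ j', ∑ k, ∑ l,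
          ((hbar k)⁻¹ * (hbar l)⁻¹) *
            ((X i k * C i j * Y j l) * (X i' k * C i' j' * Y j' l)) := by
    simp only [bb, UU, Matrix.of_apply]
    refine sum_congr rfl fun i _ => sum_congr rfl fun i' _ => sum_congr rfl fun j _ =>
      sum_congr rfl fun j' _ => ?_
    rw [Finset.sum_mul, Finset.sum_mul, Finset.sum_mul]
    refine sum_congr rfl fun k _ => ?_
    rw [Finset.mul_sum]
    exact sum_congr rfl fun l _ => by ring
  rw [lhs, sum_reorder6]
  simp only [sq, Finset.sum_mul, Finset.mul_sum]
  exact sum_congr rfl fun k _ => sum_congr rfl fun l _ => sum_congr rfl fun i _ =>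
    sum_congr rfl fun j _ => sum_congr rfl fun i' _ => sum_congr rfl fun j' _ => by ring

private lemma bb_UU_nonneg (C : Matrix (Fin N) (Fin N) ℝ) {hbar : Fin n → ℝ}
    (hbarpos : ∀ k, 0 < hbar k) (X Y : Matrix (Fin N) (Fin n) ℝ) :
    0 ≤ bb C (UU hbar X X) (UU hbar Y Y) := by
  rw [bb_UU_eq]
  refine Finset.sum_nonneg fun k _ => Finset.sum_nonneg fun l _ => ?_
  have := (hbarpos k).le
  have := (hbarpos l).le
  positivity

private lemma ff_eq_bb (C : Matrix (Fin N) (Fin N) ℝ) (hbar : Fin n → ℝ)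
    (T : Matrix (Fin N) (Fin n) ℝ) : ff C hbar T = bb C (UU hbar T T) (UU hbar T T) := by
  rw [bb_UU_eq]; rfl

/-- Bilinear expansions of `UU`. -/
private lemma UU_comb (hbar : Fin n → ℝ) (T0 T1 : Matrix (Fin N) (Fin n) ℝ) (a b : ℝ) :
    UU hbar (a • T0 + b • T1) (a • T0 + b • T1)
      = (a * a) • UU hbar T0 T0 + (a * b) • UU hbar T0 T1 + (a * b) • UU hbar T1 T0
        + (b * b) • UU hbar T1 T1 := by
  ext i i'
  simp only [UU, Matrix.of_apply, Matrix.add_apply, Matrix.smul_apply, smul_eq_mul,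
    Finset.mul_sum, ← Finset.sum_add_distrib]
  exact sum_congr rfl fun k _ => by ring

private lemma UU_sub (hbar : Fin n → ℝ) (T0 T1 : Matrix (Fin N) (Fin n) ℝ) :
    UU hbar (T0 - T1) (T0 - T1)
      = UU hbar T0 T0 - UU hbar T0 T1 - UU hbar T1 T0 + UU hbar T1 T1 := by
  ext i i'
  simp only [UU, Matrix.of_apply, Matrix.sub_apply, Matrix.add_apply,
    ← Finset.sum_add_distrib, ← Finset.sum_sub_distrib]
  exact sum_congr rfl fun k _ => by ring

end Aux
section Aux2

open Finset

variable {N n : ℕ}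

private lemma g_eq_bb (C : Matrix (Fin N) (Fin N) ℝ) (U : Matrix (Fin N) (Fin N) ℝ) :
    (∑ p : Fin N × Fin N, ∑ q : Fin N × Fin N, U p.1 p.2 * (C ⊗ₖ C) p q * U q.1 q.2)
      = bb C U U := by
  simp only [Fintype.sum_prod_type, Matrix.kroneckerMap_apply, bb]
  exact sum_congr rfl fun i _ => sum_congr rfl fun i' _ =>
    sum_congr rfl fun j _ => sum_congr rfl fun j' _ => by ring

/-- From convexity of the Kronecker quadratic form on `U(h,h)`, the form is nonnegative
on differences of elements of `U(h,h)`. -/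
private lemma bb_diff_nonneg {C : Matrix (Fin N) (Fin N) ℝ} {h : Fin N → ℝ}
    (hconv : ConvexOn ℝ
      {U : Matrix (Fin N) (Fin N) ℝ |
        (∀ i j, 0 ≤ U i j) ∧ (∀ i, ∑ j, U i j = h i) ∧ ∀ j, ∑ i, U i j = h j}
      (fun U => ∑ p : Fin N × Fin N, ∑ q : Fin N × Fin N,
        U p.1 p.2 * (C ⊗ₖ C) p q * U q.1 q.2))
    {U0 U1 : Matrix (Fin N) (Fin N) ℝ}
    (h0 : U0 ∈ {U : Matrix (Fin N) (Fin N) ℝ |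
        (∀ i j, 0 ≤ U i j) ∧ (∀ i, ∑ j, U i j = h i) ∧ ∀ j, ∑ i, U i j = h j})
    (h1 : U1 ∈ {U : Matrix (Fin N) (Fin N) ℝ |
        (∀ i j, 0 ≤ U i j) ∧ (∀ i, ∑ j, U i j = h i) ∧ ∀ j, ∑ i, U i j = h j}) :
    0 ≤ bb C (U0 - U1) (U0 - U1) := by
  have h2 := hconv.2 h0 h1 (by norm_num : (0:ℝ) ≤ 1/2) (by norm_num : (0:ℝ) ≤ 1/2)
    (by norm_num : (1:ℝ)/2 + 1/2 = 1)
  simp only [g_eq_bb, smul_eq_mul] at h2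
  simp only [bb_add_left, bb_add_right, bb_smul_left, bb_smul_right] at h2
  simp only [bb_sub_left, bb_sub_right]
  linarith

/-- `UU hbar T T ∈ U(h,h)` for `T ∈ U(h,hbar)`. -/
private lemma UU_mem {h : Fin N → ℝ} {hbar : Fin n → ℝ} (hbarpos : ∀ k, 0 < hbar k)
    {T : Matrix (Fin N) (Fin n) ℝ} (hTpos : ∀ i k, 0 ≤ T i k)
    (hrow : ∀ i, ∑ k, T i k = h i) (hcol : ∀ k, ∑ i, T i k = hbar k) :
    (∀ i j, 0 ≤ UU hbar T T i j) ∧ (∀ i, ∑ j, UU hbar T T i j = h i) ∧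
      ∀ j, ∑ i, UU hbar T T i j = h j := by
  refine ⟨fun i j => ?_, fun i => ?_, fun j => ?_⟩
  · simp only [UU, Matrix.of_apply]
    exact Finset.sum_nonneg fun k _ => mul_nonneg (inv_nonneg.2 (hbarpos k).le)
      (mul_nonneg (hTpos i k) (hTpos j k))
  · simp only [UU, Matrix.of_apply]
    rw [Finset.sum_comm, ← hrow i]
    refine sum_congr rfl fun k _ => ?_
    have : ∑ j, (hbar k)⁻¹ * (T i k * T j k) = ((hbar k)⁻¹ * T i k) * ∑ j, T j k := by
      rw [Finset.mul_sum]
      exact sum_congr rfl fun j _ => by ring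
    rw [this, hcol k]
    rw [mul_comm, ← mul_assoc, mul_inv_cancel₀ (hbarpos k).ne', one_mul]
  · simp only [UU, Matrix.of_apply]
    rw [Finset.sum_comm, ← hrow j]
    refine sum_congr rfl fun k _ => ?_
    have : ∑ i, (hbar k)⁻¹ * (T i k * T j k) = ((hbar k)⁻¹ * T j k) * ∑ i, T i k := by
      rw [Finset.mul_sum]
      exact sum_congr rfl fun i _ => by ring
    rw [this, hcol k]
    rw [mul_comm, ← mul_assoc, mul_inv_cancel₀ (hbarpos k).ne', one_mul]

end Aux2
section Aux3

open Finset

variable {N n : ℕ}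

private lemma ff_convex_ineq {C : Matrix (Fin N) (Fin N) ℝ} {h : Fin N → ℝ}
    {hbar : Fin n → ℝ} (hbarpos : ∀ k, 0 < hbar k)
    (hconv : ConvexOn ℝ
      {U : Matrix (Fin N) (Fin N) ℝ |
        (∀ i j, 0 ≤ U i j) ∧ (∀ i, ∑ j, U i j = h i) ∧ ∀ j, ∑ i, U i j = h j}
      (fun U => ∑ p : Fin N × Fin N, ∑ q : Fin N × Fin N,
        U p.1 p.2 * (C ⊗ₖ C) p q * U q.1 q.2))
    {T0 T1 : Matrix (Fin N) (Fin n) ℝ}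
    (h0 : (∀ i j, 0 ≤ T0 i j) ∧ (∀ i, ∑ j, T0 i j = h i) ∧ ∀ k, ∑ i, T0 i k = hbar k)
    (h1 : (∀ i j, 0 ≤ T1 i j) ∧ (∀ i, ∑ j, T1 i j = h i) ∧ ∀ k, ∑ i, T1 i k = hbar k)
    {a b : ℝ} (ha : 0 ≤ a) (hb : 0 ≤ b) (hab : a + b = 1) :
    ff C hbar (a • T0 + b • T1) ≤ a * ff C hbar T0 + b * ff C hbar T1 := by
  have m0 := UU_mem hbarpos h0.1 h0.2.1 h0.2.2
  have m1 := UU_mem hbarpos h1.1 h1.2.1 h1.2.2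
  have n1 : 0 ≤ a * b * bb C (UU hbar T0 T0 - UU hbar T1 T1)
      (UU hbar T0 T0 - UU hbar T1 T1) :=
    mul_nonneg (mul_nonneg ha hb) (bb_diff_nonneg hconv m0 m1)
  have n2 : 0 ≤ a * b * bb C (UU hbar (a • T0 + b • T1) (a • T0 + b • T1))
      (UU hbar (T0 - T1) (T0 - T1)) :=
    mul_nonneg (mul_nonneg ha hb) (bb_UU_nonneg C hbarpos _ _)
  have n3 : 0 ≤ a * b * bb C (UU hbar (T0 - T1) (T0 - T1))
      (UU hbar (a • T0 + b • T1) (a • T0 + b • T1)) :=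
    mul_nonneg (mul_nonneg ha hb) (bb_UU_nonneg C hbarpos _ _)
  have n4 : 0 ≤ (a * b) * ((a * b) * bb C (UU hbar (T0 - T1) (T0 - T1))
      (UU hbar (T0 - T1) (T0 - T1))) :=
    mul_nonneg (mul_nonneg ha hb) (mul_nonneg (mul_nonneg ha hb)
      (bb_UU_nonneg C hbarpos _ _))
  rw [ff_eq_bb, ff_eq_bb, ff_eq_bb]
  rw [UU_comb] at n2 n3 ⊢
  rw [UU_sub] at n2 n3 n4
  simp only [bb_add_left, bb_add_right, bb_sub_left, bb_sub_right, bb_smul_left,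
    bb_smul_right] at n1 n2 n3 n4 ⊢
  have hb' : b = 1 - a := by linarith
  subst hb'
  linarith [n1, n2, n3, n4]

private lemma E_eq {C : Matrix (Fin N) (Fin N) ℝ} {h : Fin N → ℝ} {hbar : Fin n → ℝ}
    (hbarpos : ∀ k, 0 < hbar k) {T : Matrix (Fin N) (Fin n) ℝ}
    (hT : (∀ i j, 0 ≤ T i j) ∧ (∀ i, ∑ j, T i j = h i) ∧ ∀ k, ∑ i, T i k = hbar k) :
    GWEnergy C (CbarOf C T) T
      = (∑ i, ∑ j, (C i j) ^ 2 * h i * h j) - ff C hbar T := by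
  obtain ⟨hTpos, hrow, hcol⟩ := hT
  have hCbar : ∀ k l, CbarOf C T k l = (hbar k)⁻¹ * (hbar l)⁻¹ * AA C T k l := by
    intro k l
    have hck : colSum T k = hbar k := hcol k
    have hcl : colSum T l = hbar l := hcol l
    simp only [CbarOf, Matrix.of_apply, hck, hcl,
      if_pos (mul_pos (hbarpos k) (hbarpos l))]
    simp only [AA]
    rw [div_eq_mul_inv, mul_inv]
    ring
  have hsplit : GWEnergy C (CbarOf C T) T
      = (∑ i, ∑ j, ∑ k, ∑ l, (C i j) ^ 2 * (T i k * T j l))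
        - (∑ i, ∑ j, ∑ k, ∑ l,
            2 * ((hbar k)⁻¹ * (hbar l)⁻¹ * AA C T k l) * C i j * (T i k * T j l))
        + ∑ i, ∑ j, ∑ k, ∑ l,
            ((hbar k)⁻¹ * (hbar l)⁻¹ * AA C T k l) ^ 2 * (T i k * T j l) := by
    simp only [GWEnergy, hCbar, ← Finset.sum_sub_distrib, ← Finset.sum_add_distrib]
    exact sum_congr rfl fun i _ => sum_congr rfl fun j _ => sum_congr rfl fun k _ =>
      sum_congr rfl fun l _ => by ring
  have h1 : (∑ i, ∑ j, ∑ k, ∑ l, (C i j) ^ 2 * (T i k * T j l))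
      = ∑ i, ∑ j, (C i j) ^ 2 * h i * h j := by
    refine sum_congr rfl fun i _ => sum_congr rfl fun j _ => ?_
    rw [mul_sum_sum, hrow i, hrow j, mul_assoc]
  have h2 : (∑ i, ∑ j, ∑ k, ∑ l,
        2 * ((hbar k)⁻¹ * (hbar l)⁻¹ * AA C T k l) * C i j * (T i k * T j l))
      = 2 * ff C hbar T := by
    rw [sum_reorder4]
    simp only [ff, Finset.mul_sum]
    refine sum_congr rfl fun k _ => sum_congr rfl fun l _ => ?_
    have e1 : ∑ i, ∑ j,
        2 * ((hbar k)⁻¹ * (hbar l)⁻¹ * AA C T k l) * C i j * (T i k * T j l)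
        = (2 * ((hbar k)⁻¹ * (hbar l)⁻¹ * AA C T k l)) *
            ∑ i, ∑ j, T i k * C i j * T j l := by
      rw [Finset.mul_sum]
      exact sum_congr rfl fun i _ => by
        rw [Finset.mul_sum]; exact sum_congr rfl fun j _ => by ring
    rw [e1]
    have e2 : (∑ i, ∑ j, T i k * C i j * T j l) = AA C T k l := rfl
    rw [e2]; ring
  have h3 : (∑ i, ∑ j, ∑ k, ∑ l,
        ((hbar k)⁻¹ * (hbar l)⁻¹ * AA C T k l) ^ 2 * (T i k * T j l))
      = ff C hbar T := by
    rw [sum_reorder4]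
    simp only [ff]
    refine sum_congr rfl fun k _ => sum_congr rfl fun l _ => ?_
    rw [mul_sum_sum, hcol k, hcol l]
    have hk := (hbarpos k).ne'
    have hl := (hbarpos l).ne'
    field_simp
  rw [hsplit, h1, h2, h3]
  ring

end Aux3
section Aux4

open Finset

variable {N n : ℕ}

private lemma aux_exists (C : Matrix (Fin N) (Fin N) ℝ) (h : Fin N → ℝ)
    (hbar : Fin n → ℝ) (hpos : ∀ i, 0 < h i) (hsum : ∑ i, h i = 1)
    (hbarpos : ∀ k, 0 < hbar k) (hbarsum : ∑ k, hbar k = 1)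
    (hffconv : ConvexOn ℝ
      {T : Matrix (Fin N) (Fin n) ℝ |
        (∀ i j, 0 ≤ T i j) ∧ (∀ i, ∑ j, T i j = h i) ∧ ∀ k, ∑ i, T i k = hbar k}
      (ff C hbar)) :
    ∃ z ∈ Set.extremePoints ℝ
        {T : Matrix (Fin N) (Fin n) ℝ |
          (∀ i j, 0 ≤ T i j) ∧ (∀ i, ∑ j, T i j = h i) ∧ ∀ k, ∑ i, T i k = hbar k},
      ∀ y, ((∀ i j, 0 ≤ y i j) ∧ (∀ i, ∑ j, y i j = h i) ∧ ∀ k, ∑ i, y i k = hbar k) →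
        ff C hbar y ≤ ff C hbar z := by
  classical
  set s : Set (Matrix (Fin N) (Fin n) ℝ) :=
    {T : Matrix (Fin N) (Fin n) ℝ |
      (∀ i j, 0 ≤ T i j) ∧ (∀ i, ∑ j, T i j = h i) ∧ ∀ k, ∑ i, T i k = hbar k}
    with hsdef
  have hAcont : ∀ k l, Continuous fun T : Matrix (Fin N) (Fin n) ℝ => AA C T k l := by
    intro k l
    simp only [AA]
    refine continuous_finset_sum _ fun i _ => continuous_finset_sum _ fun j _ => ?_
    exact ((Continuous.matrix_elem (A := fun T : Matrix (Fin N) (Fin n) ℝ => T) continuous_id i k).mul continuous_const).mul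
      (Continuous.matrix_elem (A := fun T : Matrix (Fin N) (Fin n) ℝ => T) continuous_id j l)
  have hfcont : Continuous (ff C hbar) := by
    have : ff C hbar = fun T => ∑ k, ∑ l, (hbar k)⁻¹ * (hbar l)⁻¹ * (AA C T k l) ^ 2 :=
      rfl
    rw [this]
    refine continuous_finset_sum _ fun k _ => continuous_finset_sum _ fun l _ => ?_
    exact (continuous_const.mul continuous_const).mul ((hAcont k l).pow 2)
  have hclosed : IsClosed s := by
    have hs2 : s = (⋂ i, ⋂ j, {T : Matrix (Fin N) (Fin n) ℝ | 0 ≤ T i j}) ∩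
        ((⋂ i, {T : Matrix (Fin N) (Fin n) ℝ | ∑ j, T i j = h i}) ∩
          ⋂ k, {T : Matrix (Fin N) (Fin n) ℝ | ∑ i, T i k = hbar k}) := by
      ext T
      simp [hsdef, Set.mem_iInter, Set.mem_setOf_eq]
    rw [hs2]
    refine IsClosed.inter (isClosed_iInter fun i => isClosed_iInter fun j => ?_)
      (IsClosed.inter (isClosed_iInter fun i => ?_) (isClosed_iInter fun k => ?_))
    · exact isClosed_le continuous_const ((continuous_apply j).comp (continuous_apply i))
    · exact isClosed_eq (continuous_finset_sum _ fun j _ =>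
        (continuous_apply j).comp (continuous_apply i)) continuous_const
    · exact isClosed_eq (continuous_finset_sum _ fun i _ =>
        (continuous_apply k).comp (continuous_apply i)) continuous_const
  have hsub : s ⊆ Set.pi Set.univ fun _ : Fin N =>
      Set.pi Set.univ fun _ : Fin n => Set.Icc (0:ℝ) 1 := by
    rintro T ⟨hTpos, hrowT, hcolT⟩
    intro i _
    intro k _
    refine ⟨hTpos i k, ?_⟩
    have h1 : T i k ≤ ∑ i', T i' k :=
      Finset.single_le_sum (fun i' _ => hTpos i' k) (Finset.mem_univ i)
    have h2 : hbar k ≤ ∑ k', hbar k' :=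
      Finset.single_le_sum (fun k' _ => (hbarpos k').le) (Finset.mem_univ k)
    rw [hcolT k] at h1
    rw [hbarsum] at h2
    linarith
  have hcomp : IsCompact s :=
    (isCompact_univ_pi fun _ => isCompact_univ_pi fun _ => isCompact_Icc).of_isClosed_subset
      hclosed hsub
  have hne : s.Nonempty := by
    refine ⟨(fun i k => h i * hbar k : Matrix (Fin N) (Fin n) ℝ),
      fun i k => mul_nonneg (hpos i).le (hbarpos k).le, fun i => ?_, fun k => ?_⟩
    · rw [← Finset.mul_sum, hbarsum, mul_one]
    · rw [← Finset.sum_mul, hsum, one_mul]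
  obtain ⟨x, hxs, hxmax⟩ := hcomp.exists_isMaxOn hne hfcont.continuousOn
  set F := s ∩ {y | ff C hbar x ≤ ff C hbar y} with hFdef
  have hFcomp : IsCompact F := hcomp.inter_right (isClosed_le continuous_const hfcont)
  have hFne : F.Nonempty := ⟨x, hxs, le_refl (ff C hbar x)⟩
  have hgcont : Continuous fun T : Matrix (Fin N) (Fin n) ℝ => ∑ i, ∑ k, (T i k) ^ 2 :=
    continuous_finset_sum _ fun i _ => continuous_finset_sum _ fun k _ =>
      ((continuous_apply k).comp (continuous_apply i)).pow 2
  obtain ⟨z, hzF, hzmax⟩ := hFcomp.exists_isMaxOn hFne hgcont.continuousOn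
  have hzs : z ∈ s := hzF.1
  have hfz : ff C hbar z = ff C hbar x := le_antisymm (hxmax hzs) hzF.2
  refine ⟨z, ⟨hzs, ?_⟩, fun y hy => by rw [hfz]; exact hxmax hy⟩
  intro u hu v hv hseg
  obtain ⟨a, b, ha, hb, hab, hz'⟩ := hseg
  have hfu : ff C hbar u ≤ ff C hbar x := hxmax hu
  have hfv : ff C hbar v ≤ ff C hbar x := hxmax hv
  have hcomb := hffconv.2 hu hv ha.le hb.le hab
  rw [hz', smul_eq_mul, smul_eq_mul] at hcomb
  have e1 : a * ff C hbar u ≤ a * ff C hbar x := mul_le_mul_of_nonneg_left hfu ha.le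
  have e2 : b * ff C hbar v ≤ b * ff C hbar x := mul_le_mul_of_nonneg_left hfv hb.le
  have hsplitx : a * ff C hbar x + b * ff C hbar x = ff C hbar x := by
    rw [← add_mul, hab, one_mul]
  have e3 : a * ff C hbar u = a * ff C hbar x := by linarith
  have e4 : b * ff C hbar v = b * ff C hbar x := by linarith
  have hfu' : ff C hbar u = ff C hbar x := mul_left_cancel₀ ha.ne' e3
  have hfv' : ff C hbar v = ff C hbar x := mul_left_cancel₀ hb.ne' e4
  have hgu : (∑ i, ∑ k, (u i k) ^ 2) ≤ ∑ i, ∑ k, (z i k) ^ 2 :=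
    hzmax ⟨hu, le_of_eq hfu'.symm⟩
  have hgv : (∑ i, ∑ k, (v i k) ^ 2) ≤ ∑ i, ∑ k, (z i k) ^ 2 :=
    hzmax ⟨hv, le_of_eq hfv'.symm⟩
  have hb2 : b = 1 - a := by linarith
  subst hb2
  have hgid : (∑ i, ∑ k, (z i k) ^ 2)
      = a * (∑ i, ∑ k, (u i k) ^ 2) + (1 - a) * (∑ i, ∑ k, (v i k) ^ 2)
        - a * (1 - a) * ∑ i, ∑ k, (u i k - v i k) ^ 2 := by
    rw [← hz']
    simp only [Matrix.add_apply, Matrix.smul_apply, smul_eq_mul, Finset.mul_sum,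
      ← Finset.sum_sub_distrib, ← Finset.sum_add_distrib]
    exact sum_congr rfl fun i _ => sum_congr rfl fun k _ => by ring
  have hS0 : 0 ≤ ∑ i, ∑ k, (u i k - v i k) ^ 2 :=
    Finset.sum_nonneg fun i _ => Finset.sum_nonneg fun k _ => sq_nonneg _
  have habS : a * (1 - a) * (∑ i, ∑ k, (u i k - v i k) ^ 2) ≤ 0 := by nlinarith
  have hS : (∑ i, ∑ k, (u i k - v i k) ^ 2) = 0 := by
    rcases mul_eq_zero.1 (le_antisymm habS
        (mul_nonneg (mul_pos ha hb).le hS0)) with h0 | h0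
    · exact absurd h0 (mul_pos ha hb).ne'
    · exact h0
  have huv : u = v := by
    funext i k
    have hi := (Finset.sum_eq_zero_iff_of_nonneg fun i _ =>
      Finset.sum_nonneg fun k _ => sq_nonneg ((u i k - v i k))).1 hS i (Finset.mem_univ i)
    have hk := (Finset.sum_eq_zero_iff_of_nonneg fun k _ =>
      sq_nonneg ((u i k - v i k))).1 hi k (Finset.mem_univ k)
    have := pow_eq_zero_iff (n := 2) (by norm_num) |>.1 hk
    linarith [sub_eq_zero.1 this]
  have hz2 : z = u := by
    rw [← hz', huv, ← add_smul, hab, one_smul]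
  exact hz2.symm

end Aux4
theorem GW_barycenter_fixed_weights_concave_extreme {N n : ℕ}
    (C : Matrix (Fin N) (Fin N) ℝ) (h : Fin N → ℝ) (hbar : Fin n → ℝ)
    (hpos : ∀ i, 0 < h i) (hsum : ∑ i, h i = 1)
    (hbarpos : ∀ k, 0 < hbar k) (hbarsum : ∑ k, hbar k = 1)
    (hconv : ConvexOn ℝ
      {U : Matrix (Fin N) (Fin N) ℝ |
        (∀ i j, 0 ≤ U i j) ∧ (∀ i, ∑ j, U i j = h i) ∧ ∀ j, ∑ i, U i j = h j}
      (fun U => ∑ p : Fin N × Fin N, ∑ q : Fin N × Fin N,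
        U p.1 p.2 * (C ⊗ₖ C) p q * U q.1 q.2)) :
    ConcaveOn ℝ
      {T : Matrix (Fin N) (Fin n) ℝ |
        (∀ i j, 0 ≤ T i j) ∧ (∀ i, ∑ j, T i j = h i) ∧ ∀ k, ∑ i, T i k = hbar k}
      (fun T => GWEnergy C (CbarOf C T) T) ∧
    ∃ T ∈ Set.extremePoints ℝ
        {T : Matrix (Fin N) (Fin n) ℝ |
          (∀ i j, 0 ≤ T i j) ∧ (∀ i, ∑ j, T i j = h i) ∧ ∀ k, ∑ i, T i k = hbar k},
      ∀ T' : Matrix (Fin N) (Fin n) ℝ,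
        ((∀ i j, 0 ≤ T' i j) ∧ (∀ i, ∑ j, T' i j = h i) ∧ ∀ k, ∑ i, T' i k = hbar k) →
        GWEnergy C (CbarOf C T) T ≤ GWEnergy C (CbarOf C T') T' := by
  have hsconv : Convex ℝ
      {T : Matrix (Fin N) (Fin n) ℝ |
        (∀ i j, 0 ≤ T i j) ∧ (∀ i, ∑ j, T i j = h i) ∧ ∀ k, ∑ i, T i k = hbar k} := by
    intro x hx y hy a b ha hb hab
    refine ⟨fun i j => ?_, fun i => ?_, fun k => ?_⟩
    · simp only [Matrix.add_apply, Matrix.smul_apply, smul_eq_mul]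
      exact add_nonneg (mul_nonneg ha (hx.1 i j)) (mul_nonneg hb (hy.1 i j))
    · simp only [Matrix.add_apply, Matrix.smul_apply, smul_eq_mul,
        Finset.sum_add_distrib, ← Finset.mul_sum]
      rw [hx.2.1 i, hy.2.1 i, ← add_mul, hab, one_mul]
    · simp only [Matrix.add_apply, Matrix.smul_apply, smul_eq_mul,
        Finset.sum_add_distrib, ← Finset.mul_sum]
      rw [hx.2.2 k, hy.2.2 k, ← add_mul, hab, one_mul]
  have hffconv : ConvexOn ℝ
      {T : Matrix (Fin N) (Fin n) ℝ |
        (∀ i j, 0 ≤ T i j) ∧ (∀ i, ∑ j, T i j = h i) ∧ ∀ k, ∑ i, T i k = hbar k}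
      (ff C hbar) := by
    refine ⟨hsconv, fun x hx y hy a b ha hb hab => ?_⟩
    rw [smul_eq_mul, smul_eq_mul]
    exact ff_convex_ineq hbarpos hconv hx hy ha hb hab
  constructor
  · refine ⟨hsconv, fun x hx y hy a b ha hb hab => ?_⟩
    have hxy := hsconv hx hy ha hb hab
    dsimp only
    rw [smul_eq_mul, smul_eq_mul, E_eq hbarpos hx, E_eq hbarpos hy, E_eq hbarpos hxy]
    have hc := ff_convex_ineq hbarpos hconv hx hy ha hb hab
    have e : a * ((∑ i, ∑ j, (C i j) ^ 2 * h i * h j) - ff C hbar x)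
        + b * ((∑ i, ∑ j, (C i j) ^ 2 * h i * h j) - ff C hbar y)
        = (∑ i, ∑ j, (C i j) ^ 2 * h i * h j)
          - (a * ff C hbar x + b * ff C hbar y) := by
      have hb2 : b = 1 - a := by linarith
      rw [hb2]; ring
    rw [e]
    linarith
  · obtain ⟨z, hzext, hzmax⟩ := aux_exists C h hbar hpos hsum hbarpos hbarsum hffconv
    refine ⟨z, hzext, fun T' hT' => ?_⟩
    have hzs : z ∈ {T : Matrix (Fin N) (Fin n) ℝ |
        (∀ i j, 0 ≤ T i j) ∧ (∀ i, ∑ j, T i j = h i) ∧ ∀ k, ∑ i, T i k = hbar k} :=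
      hzext.1
    rw [E_eq hbarpos hzs, E_eq hbarpos hT']
    have := hzmax T' hT'
    linarith
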